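/- Let f be an entropy generator and let a, b be real numbers with 0 < a < b < −f'(0). Then there exist N ∈ ℕ and reals q̃_1, q̃_2 with 0 < q̃_1 < q̃_2 < 1 such that every value in the interval [a, b] is attained as H_f(Q) for some probability distribution Q = (q̃_1, q̃_2, q_3, …, q_N) on {1,…,N} whose first two coordinates are q̃_1 and q̃_2. -/

import Mathlib

open Filter Set

/-- A probability distribution on ℕ: nonnegative weights summing to 1. -/
def IsProbDist (p : ℕ → ℝ) : Prop := (∀ i, 0 ≤ p i) ∧ HasSum p 1

/-- An entropy generator: real analytic on `[0,∞)`, strictly convex on `[0,∞)`,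
with `f 0 = f 1 = 0` and `f' 1 = 1`. -/
def IsEntropyGenerator (f : ℝ → ℝ) : Prop :=
  (∀ x ∈ Set.Ici (0 : ℝ), AnalyticAt ℝ f x) ∧
  StrictConvexOn ℝ (Set.Ici (0 : ℝ)) f ∧
  f 0 = 0 ∧ f 1 = 0 ∧ deriv f 1 = 1

lemma auxPathCont (f : ℝ → ℝ) (hca : ∀ x : ℝ, 0 ≤ x → ContinuousAt f x)
    (c0 k m r : ℝ) (hm : 0 ≤ m) (hr : 0 ≤ r) :
    ContinuousOn (fun t : ℝ => -(c0 + f ((1-t)*m + t*r) + k * f (t*r))) (Set.Icc 0 1) := by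
  intro t ht
  have hA0 : 0 ≤ (1-t)*m + t*r :=
    add_nonneg (mul_nonneg (by linarith [ht.2]) hm) (mul_nonneg ht.1 hr)
  have hB0 : 0 ≤ t*r := mul_nonneg ht.1 hr
  have hAc : Continuous (fun s : ℝ => (1-s)*m + s*r) := by continuity
  have hBc : Continuous (fun s : ℝ => s*r) := by continuity
  have c1 : ContinuousAt (f ∘ fun s : ℝ => (1-s)*m + s*r) t :=
    ContinuousAt.comp (hca _ hA0) hAc.continuousAt
  have c2 : ContinuousAt (f ∘ fun s : ℝ => s*r) t :=
    ContinuousAt.comp (hca _ hB0) hBc.continuousAt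
  have c1' : ContinuousAt (fun s : ℝ => f ((1-s)*m + s*r)) t := c1
  have c2' : ContinuousAt (fun s : ℝ => f (s*r)) t := c2
  exact (((continuousAt_const.add c1').add (continuousAt_const.mul c2')).neg).continuousWithinAt

theorem stmt10 (f : ℝ → ℝ) (hf : IsEntropyGenerator f)
    (a b : ℝ) (ha : 0 < a) (hab : a < b) (hb : b < -deriv f 0) :
    ∃ (N : ℕ) (q₁ q₂ : ℝ), 0 < q₁ ∧ q₁ < q₂ ∧ q₂ < 1 ∧
      ∀ c ∈ Set.Icc a b, ∃ Q : Fin (N + 2) → ℝ,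
        (∀ i, 0 ≤ Q i) ∧ (∑ i, Q i) = 1 ∧
        Q 0 = q₁ ∧ Q 1 = q₂ ∧ (-∑ i, f (Q i)) = c := by
  obtain ⟨han, hconv, hf0, hf1, hf'1⟩ := hf
  have hca : ∀ x : ℝ, 0 ≤ x → ContinuousAt f x := fun x hx => (han x (Set.mem_Ici.mpr hx)).continuousAt
  set d := deriv f 0 with hd
  -- basic limits
  have t1 : Tendsto f (nhds 0) (nhds 0) := by
    have := hca 0 le_rfl; rwa [ContinuousAt, hf0] at this
  have tf1 : Tendsto f (nhds 1) (nhds 0) := by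
    have := hca 1 zero_le_one; rwa [ContinuousAt, hf1] at this
  have t2 : Tendsto (fun δ : ℝ => f (2*δ)) (nhds 0) (nhds 0) := by
    refine t1.comp ?_
    have : Tendsto (fun δ : ℝ => 2*δ) (nhds 0) (nhds (2*0)) :=
      (Continuous.tendsto (by continuity) 0)
    simpa using this
  have t3 : Tendsto (fun δ : ℝ => f (1-3*δ)) (nhds 0) (nhds 0) := by
    refine tf1.comp ?_
    have : Tendsto (fun δ : ℝ => 1-3*δ) (nhds 0) (nhds (1-3*0)) :=
      (Continuous.tendsto (by continuity) 0)
    simpa using this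
  have h1 : Tendsto (fun δ : ℝ => f δ + f (2*δ) + f (1-3*δ)) (nhds 0) (nhds 0) := by
    simpa using (t1.add t2).add t3
  have h2 : Tendsto (fun δ : ℝ => -(1-3*δ)*d - (f δ + f (2*δ))) (nhds 0) (nhds (-d)) := by
    have hc1 : Tendsto (fun δ : ℝ => -(1-3*δ)*d) (nhds 0) (nhds (-(1-3*0)*d)) :=
      (Continuous.tendsto (by continuity) 0)
    have := hc1.sub (t1.add t2)
    simpa using this
  have hev1 : ∀ᶠ δ in nhdsWithin (0:ℝ) (Ioi 0), -a < f δ + f (2*δ) + f (1-3*δ) :=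
    (h1.mono_left nhdsWithin_le_nhds).eventually (eventually_gt_nhds (by linarith))
  have hev2 : ∀ᶠ δ in nhdsWithin (0:ℝ) (Ioi 0), b < -(1-3*δ)*d - (f δ + f (2*δ)) :=
    (h2.mono_left nhdsWithin_le_nhds).eventually (eventually_gt_nhds (by linarith))
  have hev3 : ∀ᶠ δ in nhdsWithin (0:ℝ) (Ioi 0), δ < 1/3 :=
    ((eventually_lt_nhds (show (0:ℝ) < 1/3 by norm_num)).filter_mono nhdsWithin_le_nhds)
  have hev4 : ∀ᶠ δ in nhdsWithin (0:ℝ) (Ioi 0), δ ∈ Ioi (0:ℝ) := eventually_mem_nhdsWithin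
  obtain ⟨δ, ⟨⟨hδA, hδB⟩, hδlt⟩, hδpos⟩ := (((hev1.and hev2).and hev3).and hev4).exists
  rw [Set.mem_Ioi] at hδpos
  set m : ℝ := 1 - 3*δ with hmdef
  have hm : 0 < m := by rw [hmdef]; linarith
  -- derivative at 0 and limit of N * f(m/N)
  have hd0 : HasDerivAt f d 0 := ((han 0 (Set.mem_Ici.mpr le_rfl)).differentiableAt).hasDerivAt
  have hslope : Tendsto (fun x : ℝ => f x / x) (nhdsWithin 0 {(0:ℝ)}ᶜ) (nhds d) := by
    have := hasDerivAt_iff_tendsto_slope.mp hd0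
    refine this.congr fun x => ?_
    simp [slope_def_field, hf0]
  have hm0 : Tendsto (fun n : ℕ => m / n) atTop (nhdsWithin 0 {(0:ℝ)}ᶜ) := by
    rw [tendsto_nhdsWithin_iff]
    constructor
    · exact tendsto_const_div_atTop_nhds_zero_nat m
    · filter_upwards [eventually_ge_atTop 1] with n hn
      have hn0 : (0:ℝ) < (n:ℝ) := by exact_mod_cast Nat.lt_of_lt_of_le Nat.zero_lt_one hn
      have hne : m / (n:ℝ) ≠ 0 := by positivity
      simpa [Set.mem_compl_iff] using hne
  have hKlim : Tendsto (fun n : ℕ => (n:ℝ) * f (m/n)) atTop (nhds (m * d)) := by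
    have hcomp := hslope.comp hm0
    have := hcomp.const_mul m
    refine this.congr' ?_
    filter_upwards [eventually_ge_atTop 1] with n hn
    have hn0 : (0:ℝ) < (n:ℝ) := by exact_mod_cast Nat.lt_of_lt_of_le Nat.zero_lt_one hn
    have : m / (n:ℝ) ≠ 0 := by positivity
    simp only [Function.comp_apply]
    field_simp
  have hmd : m * d < -b - (f δ + f (2*δ)) := by
    have := hδB; rw [hmdef]; nlinarith [hδB]
  have hevK : ∀ᶠ n : ℕ in atTop, (n:ℝ) * f (m/n) < -b - (f δ + f (2*δ)) :=
    hKlim.eventually (eventually_lt_nhds hmd)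
  obtain ⟨K, hK1, hKf⟩ := ((eventually_ge_atTop 1).and hevK).exists
  obtain ⟨K', rfl⟩ : ∃ K', K = K' + 1 := ⟨K - 1, by omega⟩
  have hKf' : ((K':ℝ)+1) * f (m/((K':ℝ)+1)) < -b - (f δ + f (2*δ)) := by
    push_cast at hKf; exact hKf
  have hKrpos : (0:ℝ) < (K':ℝ)+1 := by positivity
  have hrpos : (0:ℝ) < m/((K':ℝ)+1) := by positivity
  refine ⟨K' + 1, δ, 2*δ, hδpos, by linarith, by linarith, ?_⟩
  intro c hc
  have hgc := auxPathCont f hca (f δ + f (2*δ)) (K':ℝ) m (m/((K':ℝ)+1)) hm.le hrpos.le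
  have hg0 : (fun t : ℝ => -((f δ + f (2*δ)) + f ((1-t)*m + t*(m/((K':ℝ)+1))) + (K':ℝ) * f (t*(m/((K':ℝ)+1))))) 0
      = -(f δ + f (2*δ) + f m) := by
    norm_num [hf0]
  have hg1 : (fun t : ℝ => -((f δ + f (2*δ)) + f ((1-t)*m + t*(m/((K':ℝ)+1))) + (K':ℝ) * f (t*(m/((K':ℝ)+1))))) 1
      = -(f δ + f (2*δ) + ((K':ℝ)+1) * f (m/((K':ℝ)+1))) := by
    norm_num; ring
  have hg0a : -(f δ + f (2*δ) + f m) < a := by linarith [hδA]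
  have hg1b : b < -(f δ + f (2*δ) + ((K':ℝ)+1) * f (m/((K':ℝ)+1))) := by linarith [hKf']
  have hcmem : c ∈ Icc ((fun t : ℝ => -((f δ + f (2*δ)) + f ((1-t)*m + t*(m/((K':ℝ)+1))) + (K':ℝ) * f (t*(m/((K':ℝ)+1))))) 0)
      ((fun t : ℝ => -((f δ + f (2*δ)) + f ((1-t)*m + t*(m/((K':ℝ)+1))) + (K':ℝ) * f (t*(m/((K':ℝ)+1))))) 1) := by
    rw [hg0, hg1]
    exact ⟨by linarith [hc.1], by linarith [hc.2]⟩
  obtain ⟨t, ht, hgt⟩ := intermediate_value_Icc zero_le_one hgc hcmem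
  simp only at hgt
  have hA0 : 0 ≤ (1-t)*m + t*(m/((K':ℝ)+1)) :=
    add_nonneg (mul_nonneg (by linarith [ht.2]) hm.le) (mul_nonneg ht.1 hrpos.le)
  have hB0 : 0 ≤ t*(m/((K':ℝ)+1)) := mul_nonneg ht.1 hrpos.le
  refine ⟨Fin.cons δ (Fin.cons (2*δ) (Fin.cons ((1-t)*m + t*(m/((K':ℝ)+1)))
    (fun _ : Fin K' => t*(m/((K':ℝ)+1))))), ?_, ?_, ?_, ?_, ?_⟩
  · intro i
    refine Fin.cases ?_ (fun j => ?_) i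
    · simpa using hδpos.le
    · simp only [Fin.cons_succ]
      refine Fin.cases ?_ (fun k => ?_) j
      · simpa using by linarith
      · simp only [Fin.cons_succ]
        refine Fin.cases ?_ (fun l => ?_) k
        · simpa using hA0
        · simpa using hB0
  · rw [Fin.sum_cons, Fin.sum_cons, Fin.sum_cons, Finset.sum_const, Finset.card_univ]
    simp only [Fintype.card_fin, nsmul_eq_mul]
    have key : t*(m/((K':ℝ)+1)) + (K':ℝ) * (t*(m/((K':ℝ)+1))) = t * m := by
      field_simp; ring
    have hm' : m = 1 - 3*δ := hmdef
    linarith [key]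
  · simp
  · have h1 : (1 : Fin (K' + 1 + 2)) = Fin.succ 0 := by ext; simp
    rw [h1, Fin.cons_succ, Fin.cons_zero]
  · have hsum : ∑ i, f ((Fin.cons δ (Fin.cons (2*δ) (Fin.cons ((1-t)*m + t*(m/((K':ℝ)+1)))
        (fun _ : Fin K' => t*(m/((K':ℝ)+1))))) : Fin (K'+1+2) → ℝ) i)
        = f δ + f (2*δ) + f ((1-t)*m + t*(m/((K':ℝ)+1))) + (K':ℝ) * f (t*(m/((K':ℝ)+1))) := by
      rw [Fin.sum_univ_succ, Fin.sum_univ_succ, Fin.sum_univ_succ]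
      simp only [Fin.cons_succ, Fin.cons_zero, Finset.sum_const, Finset.card_univ,
        Fintype.card_fin, nsmul_eq_mul]
      ring
    rw [hsum]
    linarith [hgt]
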